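/- Fix β with (q-1)/q < β ≤ 1 and let c = ceil(βq/(βq - (q-1))). Then any q-ary string v of length n ≥ c·c (so that blocks are non-trivial) has a parent in the β-approximate duplication graph of length at most n - floor(n/c); more precisely, v can be written as v = a·b·c'·b̂·d with |b| = |b̂| = floor(n/c) and d_H(b,b̂) ≤ β|b|. -/
import Mathlib


open scoped BigOperators

/-- One duplication-with-transposition step: `x = a·b·c·d → y = a·b·c·b·d`, `b` non-empty. -/
def DupStep {q : ℕ} (x y : List (Fin q)) : Prop :=
  ∃ a b c d : List (Fin q), b ≠ [] ∧ x = a ++ b ++ c ++ d ∧ y = a ++ b ++ c ++ b ++ d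

/-- `DupPath m x y` : `y` is obtained from `x` by exactly `m` duplication steps. -/
def DupPath {q : ℕ} : ℕ → List (Fin q) → List (Fin q) → Prop
  | 0, x, y => x = y
  | n + 1, x, y => ∃ z, DupStep x z ∧ DupPath n z y

/-- Hamming distance between two lists (of equal length in intended use). -/
def listHammingDist {q : ℕ} (b b' : List (Fin q)) : ℕ :=
  ((b.zip b').filter fun p => decide (p.1 ≠ p.2)).length

/-- One β-approximate duplication-with-transposition step. -/
def ApproxStep {q : ℕ} (β : ℝ) (x y : List (Fin q)) : Prop :=
  ∃ a b c bh d : List (Fin q), b ≠ [] ∧ bh.length = b.length ∧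
    (listHammingDist b bh : ℝ) ≤ β * b.length ∧
    x = a ++ b ++ c ++ d ∧ y = a ++ b ++ c ++ bh ++ d

/-- `ApproxPath β m x y` : `y` obtained from `x` by exactly `m` β-approximate duplications. -/
def ApproxPath {q : ℕ} (β : ℝ) : ℕ → List (Fin q) → List (Fin q) → Prop
  | 0, x, y => x = y
  | n + 1, x, y => ∃ z, ApproxStep β x z ∧ ApproxPath β n z y

/-- The root of a string: the subsequence of first occurrences of symbols. -/
def firstOccs {q : ℕ} (l : List (Fin q)) : List (Fin q) :=
  l.foldl (fun acc a => if a ∈ acc then acc else acc ++ [a]) []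

namespace Stmt9Aux

open Finset

variable {q : ℕ}

lemma ham_eq (z : Fin q) : ∀ b b' : List (Fin q), b.length = b'.length →
    listHammingDist b b' =
      ∑ p ∈ Finset.range b.length, (if b.getD p z ≠ b'.getD p z then 1 else 0) := by
  intro b
  induction b with
  | nil => intro b' h; simp [listHammingDist]
  | cons x xs ih =>
    intro b' h
    cases b' with
    | nil => simp at h
    | cons y ys =>
      simp only [List.length_cons, Nat.succ_eq_add_one] at h ⊢
      rw [Finset.sum_range_succ']
      simp only [List.getD_cons_succ, List.getD_cons_zero]
      rw [← ih ys (by omega)]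
      simp only [listHammingDist, List.zip_cons_cons, List.filter_cons]
      by_cases hxy : x = y <;> simp [hxy, add_comm]

lemma getD_block (v : List (Fin q)) (z : Fin q) (m k p : ℕ) (hp : p < k)
    (h : m + k ≤ v.length) : ((v.drop m).take k).getD p z = v.getD (m + p) z := by
  have h1 : p < ((v.drop m).take k).length := by
    simp only [List.length_take, List.length_drop]; omega
  have h2 : m + p < v.length := by omega
  rw [List.getD_eq_getElem _ _ h1, List.getD_eq_getElem _ _ h2]
  rw [List.getElem_take, List.getElem_drop]

lemma exists_close (hq : 2 ≤ q) (c k : ℕ) (hc2 : 2 ≤ c) (f : ℕ → ℕ → Fin q)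
    (β : ℝ) (hβ0 : 0 ≤ β)
    (key : (c : ℝ) * ((q : ℝ) - 1) ≤ (q : ℝ) * β * ((c : ℝ) - 1)) :
    ∃ i j, i < j ∧ j < c ∧
      ((((Finset.range k).filter (fun p => f i p ≠ f j p)).card : ℝ)) ≤ β * k := by
  by_contra hcon
  push_neg at hcon
  set d : ℕ → ℕ → ℕ := fun i j => (((Finset.range k).filter (fun p => f i p ≠ f j p)).card)
    with hd
  have dsymm : ∀ i j, d i j = d j i := by
    intro i j
    simp only [hd]
    congr 1
    apply Finset.filter_congr
    intro p _
    simp [ne_comm]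
  have hstrict : ∀ i ∈ Finset.range c, ∀ j ∈ Finset.range c, j ≠ i → β * k < (d i j : ℝ) := by
    intro i hi j hj hij
    rcases lt_or_gt_of_ne hij.symm with h | h
    · exact hcon i j h (Finset.mem_range.mp hj)
    · rw [dsymm]; exact hcon j i h (Finset.mem_range.mp hi)
  set T : ℕ := ∑ i ∈ Finset.range c, ∑ j ∈ Finset.range c, d i j with hT
  -- lower bound
  have hcast : ((c - 1 : ℕ) : ℝ) = (c : ℝ) - 1 := by
    have : 1 ≤ c := by omega
    push_cast [this]; ring
  have h1 : ∀ i ∈ Finset.range c,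
      ((c : ℝ) - 1) * (β * k) < ∑ j ∈ Finset.range c, (d i j : ℝ) := by
    intro i hi
    have hsub : Finset.range c \ {i} ⊆ Finset.range c := Finset.sdiff_subset
    have hcard : (Finset.range c \ {i}).card = c - 1 := by
      rw [Finset.card_sdiff_of_subset (by simpa using Finset.mem_range.mp (by simpa using hi))]
      simp
    have hne : (Finset.range c \ {i}).Nonempty := by
      rw [← Finset.card_pos, hcard]; omega
    have hlt : ∑ _j ∈ Finset.range c \ {i}, (β * k)
        < ∑ j ∈ Finset.range c \ {i}, (d i j : ℝ) := by
      apply Finset.sum_lt_sum_of_nonempty hne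
      intro j hj
      have hj1 := Finset.mem_sdiff.mp hj
      exact hstrict i hi j hj1.1 (by simpa using hj1.2)
    have hle : ∑ j ∈ Finset.range c \ {i}, (d i j : ℝ)
        ≤ ∑ j ∈ Finset.range c, (d i j : ℝ) := by
      apply Finset.sum_le_sum_of_subset_of_nonneg hsub
      intro j _ _; positivity
    calc ((c : ℝ) - 1) * (β * k)
        = ∑ _j ∈ Finset.range c \ {i}, (β * k) := by
          rw [Finset.sum_const, hcard, nsmul_eq_mul, hcast]
      _ < _ := lt_of_lt_of_le hlt hle
  have lower : (c : ℝ) * (((c : ℝ) - 1) * (β * k)) < (T : ℝ) := by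
    have := Finset.sum_lt_sum_of_nonempty (s := Finset.range c)
      (by rw [Finset.nonempty_range_iff]; omega) h1
    rw [Finset.sum_const, Finset.card_range, nsmul_eq_mul] at this
    calc (c : ℝ) * (((c : ℝ) - 1) * (β * k)) < ∑ i ∈ Finset.range c,
        ∑ j ∈ Finset.range c, (d i j : ℝ) := this
      _ = (T : ℝ) := by rw [hT]; push_cast; ring
  -- upper bound
  have upper : q * T + k * (c * c) ≤ q * (k * (c * c)) := by
    have hswap : T = ∑ p ∈ Finset.range k, ∑ i ∈ Finset.range c, ∑ j ∈ Finset.range c,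
        (if f i p ≠ f j p then 1 else 0) := by
      rw [hT]
      simp only [hd, Finset.card_filter]
      calc ∑ i ∈ Finset.range c, ∑ j ∈ Finset.range c, ∑ p ∈ Finset.range k,
            (if f i p ≠ f j p then 1 else 0)
          = ∑ i ∈ Finset.range c, ∑ p ∈ Finset.range k, ∑ j ∈ Finset.range c,
            (if f i p ≠ f j p then 1 else 0) :=
            Finset.sum_congr rfl (fun i _ => Finset.sum_comm)
        _ = _ := Finset.sum_comm
    have per_p : ∀ p, q * (∑ i ∈ Finset.range c, ∑ j ∈ Finset.range c,
        (if f i p ≠ f j p then 1 else 0)) + c * c ≤ q * (c * c) := by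
      intro p
      set S : ℕ := ∑ i ∈ Finset.range c, ∑ j ∈ Finset.range c,
        (if f i p ≠ f j p then 1 else 0) with hS
      set E : ℕ := ∑ i ∈ Finset.range c, ∑ j ∈ Finset.range c,
        (if f i p = f j p then 1 else 0) with hE
      have hSE : S + E = c * c := by
        rw [hS, hE, ← Finset.sum_add_distrib]
        have : ∀ i ∈ Finset.range c,
            ((∑ j ∈ Finset.range c, (if f i p ≠ f j p then 1 else 0)) +
             (∑ j ∈ Finset.range c, (if f i p = f j p then 1 else 0))) = c := by
          intro i _
          rw [← Finset.sum_add_distrib]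
          have : ∀ j ∈ Finset.range c,
              ((if f i p ≠ f j p then 1 else 0) + (if f i p = f j p then 1 else 0)) = 1 := by
            intro j _
            by_cases h : f i p = f j p <;> simp [h]
          rw [Finset.sum_congr rfl this]
          simp
        rw [Finset.sum_congr rfl this]
        simp [mul_comm]
      set N : Fin q → ℕ := fun a => ((Finset.range c).filter (fun i => f i p = a)).card
        with hN
      have hEN : E = ∑ a : Fin q, N a * N a := by
        rw [hE]
        have inner : ∀ i, (∑ j ∈ Finset.range c, (if f i p = f j p then 1 else 0))
            = N (f i p) := by
          intro i
          simp only [hN, Finset.card_filter]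
          apply Finset.sum_congr rfl
          intro j _
          by_cases h : f i p = f j p
          · rw [if_pos h, if_pos h.symm]
          · rw [if_neg h, if_neg (fun h' => h (h'.symm))]
        rw [Finset.sum_congr rfl (fun i _ => inner i)]
        rw [← Finset.sum_fiberwise_of_maps_to (t := (Finset.univ : Finset (Fin q)))
          (g := fun i => f i p) (fun i _ => Finset.mem_univ _) (fun i => N (f i p))]
        apply Finset.sum_congr rfl
        intro a _
        have : ∀ i ∈ (Finset.range c).filter (fun i => f i p = a), N (f i p) = N a := by
          intro i hi
          rw [(Finset.mem_filter.mp hi).2]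
        rw [Finset.sum_congr rfl this, Finset.sum_const, smul_eq_mul]
      have hcN : c = ∑ a : Fin q, N a := by
        have := Finset.card_eq_sum_card_fiberwise
          (f := fun i => f i p) (s := Finset.range c) (t := (Finset.univ : Finset (Fin q)))
          (fun i _ => Finset.mem_univ _)
        simpa [hN] using this
      have hCS : c * c ≤ q * E := by
        rw [hEN, hcN]
        have := sq_sum_le_card_mul_sum_sq (s := (Finset.univ : Finset (Fin q))) (f := N)
        simp only [Finset.card_univ, Fintype.card_fin, sq] at this
        exact this
      calc q * S + c * c ≤ q * S + q * E := by omega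
        _ = q * (S + E) := by ring
        _ = q * (c * c) := by rw [hSE]
    calc q * T + k * (c * c)
        = ∑ p ∈ Finset.range k, (q * (∑ i ∈ Finset.range c, ∑ j ∈ Finset.range c,
            (if f i p ≠ f j p then 1 else 0)) + c * c) := by
          rw [Finset.sum_add_distrib, ← Finset.mul_sum, ← hswap]
          simp [mul_comm]
      _ ≤ ∑ _p ∈ Finset.range k, q * (c * c) := Finset.sum_le_sum (fun p _ => per_p p)
      _ = q * (k * (c * c)) := by rw [Finset.sum_const, Finset.card_range, smul_eq_mul]; ring
  -- combine
  have upperR : (q : ℝ) * T + k * (c * c) ≤ q * (k * (c * c)) := by exact_mod_cast upper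
  have hq0 : (0 : ℝ) < q := by positivity
  have hk0 : (0 : ℝ) ≤ k := by positivity
  have hc0 : (0 : ℝ) ≤ c := by positivity
  nlinarith [mul_lt_mul_of_pos_left lower hq0,
    mul_le_mul_of_nonneg_left key (mul_nonneg hk0 hc0)]

end Stmt9Aux

/-- for `(q-1)/q < β ≤ 1` and `c = ⌈βq/(βq-(q-1))⌉`, every string of
length `n ≥ c²` splits as `a·b·c'·b̂·d` with `|b| = |b̂| = ⌊n/c⌋` and
`d_H(b,b̂) ≤ β|b|`; hence it has a parent of length at most `n - ⌊n/c⌋`. -/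
theorem stmt9 (q n : ℕ) (hq : 2 ≤ q) (β : ℝ)
    (hβ1 : ((q : ℝ) - 1) / q < β) (hβ2 : β ≤ 1)
    (c : ℕ) (hc : c = ⌈β * q / (β * q - ((q : ℝ) - 1))⌉₊)
    (v : List (Fin q)) (hv : v.length = n) (hn : c * c ≤ n) :
    ∃ a b c' bh d : List (Fin q), v = a ++ b ++ c' ++ bh ++ d ∧
      b.length = n / c ∧ bh.length = n / c ∧
      (listHammingDist b bh : ℝ) ≤ β * (b.length : ℝ) := by
  set k := n / c with hk
  have hq0 : (0 : ℝ) < q := by positivity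
  have hq1 : (1 : ℝ) ≤ (q : ℝ) - 1 := by
    have : (2 : ℝ) ≤ q := by exact_mod_cast hq
    linarith
  have hden : (0 : ℝ) < β * q - ((q : ℝ) - 1) := by
    have := (div_lt_iff₀ hq0).mp hβ1
    linarith
  have hc2 : 2 ≤ c := by
    rw [hc]
    have h1 : (1 : ℝ) < β * q / (β * q - ((q : ℝ) - 1)) := by
      rw [lt_div_iff₀ hden]
      linarith
    have h2 : (1 : ℕ) < ⌈β * q / (β * q - ((q : ℝ) - 1))⌉₊ :=
      Nat.lt_ceil.mpr (by exact_mod_cast h1)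
    omega
  have hβ0 : 0 ≤ β := by
    have h0 : (0 : ℝ) ≤ ((q : ℝ) - 1) / q := div_nonneg (by linarith) (le_of_lt hq0)
    linarith
  have hcge : β * q / (β * q - ((q : ℝ) - 1)) ≤ (c : ℝ) := hc ▸ Nat.le_ceil _
  have key : (c : ℝ) * ((q : ℝ) - 1) ≤ (q : ℝ) * β * ((c : ℝ) - 1) := by
    have := (div_le_iff₀ hden).mp hcge
    nlinarith
  have hqpos : 0 < q := by omega
  set z : Fin q := ⟨0, hqpos⟩ with hz
  set f : ℕ → ℕ → Fin q := fun i p => v.getD (i * k + p) z with hf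
  obtain ⟨i, j, hij, hjc, hclose⟩ := Stmt9Aux.exists_close hq c k hc2 f β hβ0 key
  have hck : c * k ≤ n := by rw [hk, mul_comm]; exact Nat.div_mul_le_self n c
  have hjn : (j + 1) * k ≤ n :=
    le_trans (Nat.mul_le_mul_right k (by omega)) hck
  have hin : (i + 1) * k ≤ n :=
    le_trans (Nat.mul_le_mul_right k (by omega)) hck
  have hin' : i * k + k ≤ n := by rw [← Nat.succ_mul]; exact hin
  have hjn' : j * k + k ≤ n := by rw [← Nat.succ_mul]; exact hjn
  have hijk : (i + 1) * k ≤ j * k := Nat.mul_le_mul_right k (by omega)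
  set a : List (Fin q) := v.take (i * k) with ha
  set b : List (Fin q) := (v.drop (i * k)).take k with hb
  set c' : List (Fin q) := (v.drop ((i + 1) * k)).take (j * k - (i + 1) * k) with hc'
  set bh : List (Fin q) := (v.drop (j * k)).take k with hbh
  set dd : List (Fin q) := v.drop ((j + 1) * k) with hdd
  have split : ∀ m t : ℕ, v.drop m = (v.drop m).take t ++ v.drop (m + t) := by
    intro m t
    conv_lhs => rw [← List.take_append_drop t (v.drop m)]
    rw [List.drop_drop]
  have e0 : v = a ++ v.drop (i * k) := (List.take_append_drop _ v).symm
  have e1 : v.drop (i * k) = b ++ v.drop ((i + 1) * k) := by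
    rw [split (i * k) k, hb]
    congr 2
    rw [Nat.succ_mul]
  have e2 : v.drop ((i + 1) * k) = c' ++ v.drop (j * k) := by
    rw [split ((i + 1) * k) (j * k - (i + 1) * k), hc']
    congr 2
    omega
  have e3 : v.drop (j * k) = bh ++ dd := by
    rw [split (j * k) k, hbh, hdd]
    congr 2
    rw [Nat.succ_mul]
  have lb : b.length = k := by
    rw [hb]
    simp only [List.length_take, List.length_drop, hv]
    omega
  have lbh : bh.length = k := by
    rw [hbh]
    simp only [List.length_take, List.length_drop, hv]
    omega
  have hham : listHammingDist b bh = ((Finset.range k).filter (fun p => f i p ≠ f j p)).card := by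
    rw [Stmt9Aux.ham_eq z b bh (by rw [lb, lbh]), lb, Finset.card_filter]
    apply Finset.sum_congr rfl
    intro p hp
    have hp' : p < k := Finset.mem_range.mp hp
    rw [hb, hbh, Stmt9Aux.getD_block v z (i * k) k p hp' (by rw [hv]; exact hin'),
      Stmt9Aux.getD_block v z (j * k) k p hp' (by rw [hv]; exact hjn')]
  refine ⟨a, b, c', bh, dd, ?_, lb, lbh, ?_⟩
  · rw [e0, e1, e2, e3]
    simp [List.append_assoc]
  · rw [hham, lb]
    exact hclose
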